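/- Let f : ℝ → ℝ be twice continuously differentiable, let T > 0, and let u, v : [0,T] × ℝ → ℝ be twice continuously differentiable with u(t,x) > 0 and v(t,x) > 0 everywhere, satisfying ∂_t u = ∂_x( u ∂_x( f(u+v) ) ) and ∂_t v = ∂_x( v ∂_x( f(u+v) ) ) on (0,T) × ℝ. Assume there exists R > 0 such that u(t,x) = v(t,x) for all t ∈ [0,T] and all |x| ≥ R, and that u(t,·) log(u(t,·)/v(t,·)) is integrable for each t. Then t ↦ H(u(t)||v(t)) = ∫_ℝ u(t,x) log( u(t,x)/v(t,x) ) dx is constant on [0,T]. -/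

import Mathlib

open Real Set MeasureTheory Filter Topology

/-- Partial derivative in the first (time) variable. -/
noncomputable def pt (f : ℝ → ℝ → ℝ) (t x : ℝ) : ℝ := deriv (fun s => f s x) t

/-- Partial derivative in the second (space) variable. -/
noncomputable def px (f : ℝ → ℝ → ℝ) (t x : ℝ) : ℝ := deriv (fun y => f t y) x

lemma sliceX {F : ℝ × ℝ → ℝ} {t x : ℝ} (h : DifferentiableAt ℝ F (t, x)) :
    HasDerivAt (fun y => F (t, y)) (fderiv ℝ F (t, x) (0, 1)) x := by
  have h2 : HasDerivAt (fun y : ℝ => ((t, y) : ℝ × ℝ)) ((0 : ℝ), (1 : ℝ)) x :=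
    (hasDerivAt_const x t).prodMk (hasDerivAt_id x)
  exact h.hasFDerivAt.comp_hasDerivAt x h2

lemma sliceT {F : ℝ × ℝ → ℝ} {t x : ℝ} (h : DifferentiableAt ℝ F (t, x)) :
    HasDerivAt (fun s => F (s, x)) (fderiv ℝ F (t, x) (1, 0)) t := by
  have h2 : HasDerivAt (fun s : ℝ => ((s, x) : ℝ × ℝ)) ((1 : ℝ), (0 : ℝ)) t :=
    (hasDerivAt_id t).prodMk (hasDerivAt_const t x)
  exact h.hasFDerivAt.comp_hasDerivAt t h2

/-- Preservation of the relative entropy for the general system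
`∂ₜu = ∂ₓ(u ∂ₓ(f(u+v)))`, `∂ₜv = ∂ₓ(v ∂ₓ(f(u+v)))` on `(0,T) × ℝ`:
for positive solutions agreeing outside a compact set,
`H(u(t)‖v(t)) = ∫ u log(u/v) dx` is constant on `[0,T]`. -/
theorem stmt_15 (f : ℝ → ℝ) (hf : ContDiff ℝ 2 f)
    (T : ℝ) (hT : 0 < T) (u v : ℝ → ℝ → ℝ)
    (husmooth : ContDiffOn ℝ 2 (Function.uncurry u) (Icc 0 T ×ˢ univ))
    (hvsmooth : ContDiffOn ℝ 2 (Function.uncurry v) (Icc 0 T ×ˢ univ))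
    (hupos : ∀ t x : ℝ, 0 < u t x) (hvpos : ∀ t x : ℝ, 0 < v t x)
    (hu : ∀ t ∈ Ioo (0:ℝ) T, ∀ x : ℝ,
      pt u t x = px (fun s y => u s y * px (fun a b => f (u a b + v a b)) s y) t x)
    (hv : ∀ t ∈ Ioo (0:ℝ) T, ∀ x : ℝ,
      pt v t x = px (fun s y => v s y * px (fun a b => f (u a b + v a b)) s y) t x)
    (R : ℝ) (hR : 0 < R)
    (hdecay : ∀ t ∈ Icc (0:ℝ) T, ∀ x : ℝ, R ≤ |x| → u t x = v t x)
    (hint : ∀ t ∈ Icc (0:ℝ) T,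
      Integrable (fun x => u t x * Real.log (u t x / v t x))) :
    ∀ t ∈ Icc (0:ℝ) T,
      ∫ x, u t x * Real.log (u t x / v t x)
        = ∫ x, u 0 x * Real.log (u 0 x / v 0 x) := by
  -- Notation
  set U : ℝ × ℝ → ℝ := Function.uncurry u with hU
  set V : ℝ × ℝ → ℝ := Function.uncurry v with hV
  set Ω : Set (ℝ × ℝ) := Ioo (0:ℝ) T ×ˢ (univ : Set ℝ) with hΩdef
  have hΩ : IsOpen Ω := isOpen_Ioo.prod isOpen_univ
  have hΩS : Ω ⊆ Icc (0:ℝ) T ×ˢ (univ : Set ℝ) :=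
    prod_mono_left Ioo_subset_Icc_self
  have hUΩ : ContDiffOn ℝ 2 U Ω := husmooth.mono hΩS
  have hVΩ : ContDiffOn ℝ 2 V Ω := hvsmooth.mono hΩS
  set W : ℝ × ℝ → ℝ := fun p => f (U p + V p) with hWdef
  have hW : ContDiffOn ℝ 2 W Ω := hf.comp_contDiffOn (hUΩ.add hVΩ)
  set N : ℝ × ℝ → ℝ := fun p => fderiv ℝ W p (0, 1) with hNdef
  have hN : ContDiffOn ℝ 1 N Ω :=
    (hW.fderiv_of_isOpen hΩ (by norm_num)).clm_apply contDiffOn_const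
  have hmem : ∀ t ∈ Ioo (0:ℝ) T, ∀ x : ℝ, (t, x) ∈ Ω := by
    intro t ht x; exact ⟨ht, mem_univ x⟩
  have hUd : ∀ t ∈ Ioo (0:ℝ) T, ∀ x : ℝ, DifferentiableAt ℝ U (t, x) := by
    intro t ht x
    exact (hUΩ.differentiableOn (by norm_num)).differentiableAt
      (hΩ.mem_nhds (hmem t ht x))
  have hVd : ∀ t ∈ Ioo (0:ℝ) T, ∀ x : ℝ, DifferentiableAt ℝ V (t, x) := by
    intro t ht x
    exact (hVΩ.differentiableOn (by norm_num)).differentiableAt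
      (hΩ.mem_nhds (hmem t ht x))
  have hWd : ∀ t ∈ Ioo (0:ℝ) T, ∀ x : ℝ, DifferentiableAt ℝ W (t, x) := by
    intro t ht x
    exact (hW.differentiableOn (by norm_num)).differentiableAt
      (hΩ.mem_nhds (hmem t ht x))
  have hNd : ∀ t ∈ Ioo (0:ℝ) T, ∀ x : ℝ, DifferentiableAt ℝ N (t, x) := by
    intro t ht x
    exact (hN.differentiableOn (by norm_num)).differentiableAt
      (hΩ.mem_nhds (hmem t ht x))
  -- identification of the nonlinear flux
  have hFN : ∀ t ∈ Ioo (0:ℝ) T, ∀ y : ℝ,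
      px (fun a b => f (u a b + v a b)) t y = N (t, y) := by
    intro t ht y
    have h := sliceX (hWd t ht y)
    exact h.deriv
  -- the entropy density and flux
  set L : ℝ → ℝ → ℝ := fun t x => u t x * Real.log (u t x / v t x) with hLdef
  set G : ℝ → ℝ → ℝ :=
    fun t y => u t y * N (t, y) * (Real.log (u t y) - Real.log (v t y)) with hGdef
  set D : ℝ → ℝ → ℝ := fun t x =>
    fderiv ℝ U (t, x) (1, 0) * (Real.log (u t x) - Real.log (v t x)) +
      (fderiv ℝ U (t, x) (1, 0) - u t x / v t x * fderiv ℝ V (t, x) (1, 0)) with hDdef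
  -- time derivative of the entropy density
  have K1 : ∀ t ∈ Ioo (0:ℝ) T, ∀ x : ℝ,
      HasDerivAt (fun s => L s x) (D t x) t := by
    intro t ht x
    have hut : HasDerivAt (fun s => u s x) (fderiv ℝ U (t, x) (1, 0)) t :=
      sliceT (hUd t ht x)
    have hvt : HasDerivAt (fun s => v s x) (fderiv ℝ V (t, x) (1, 0)) t :=
      sliceT (hVd t ht x)
    have hlu : HasDerivAt (fun s => Real.log (u s x))
        ((u t x)⁻¹ * fderiv ℝ U (t, x) (1, 0)) t :=
      by have h0 := (Real.hasDerivAt_log (hupos t x).ne').comp t hut; exact h0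
    have hlv : HasDerivAt (fun s => Real.log (v s x))
        ((v t x)⁻¹ * fderiv ℝ V (t, x) (1, 0)) t :=
      by have h0 := (Real.hasDerivAt_log (hvpos t x).ne').comp t hvt; exact h0
    have h := hut.mul (hlu.sub hlv)
    have heq : (fun s => L s x) =
        fun s => u s x * (Real.log (u s x) - Real.log (v s x)) := by
      funext s
      simp only [hLdef, Real.log_div (hupos s x).ne' (hvpos s x).ne']
    rw [heq]
    have hb := (hvpos t x).ne'
    have ha := (hupos t x).ne'
    have e : u t x * ((u t x)⁻¹ * fderiv ℝ U (t, x) (1, 0) -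
          (v t x)⁻¹ * fderiv ℝ V (t, x) (1, 0)) =
        fderiv ℝ U (t, x) (1, 0) - u t x / v t x * fderiv ℝ V (t, x) (1, 0) := by
      rw [mul_sub, mul_inv_cancel_left₀ ha, ← mul_assoc, ← div_eq_mul_inv]
    rw [e] at h
    exact h
  -- space derivative of the entropy flux
  have K2 : ∀ t ∈ Ioo (0:ℝ) T, ∀ x : ℝ,
      HasDerivAt (fun y => G t y) (D t x) x := by
    intro t ht x
    have hux : HasDerivAt (fun y => u t y) (fderiv ℝ U (t, x) (0, 1)) x :=
      sliceX (hUd t ht x)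
    have hvx : HasDerivAt (fun y => v t y) (fderiv ℝ V (t, x) (0, 1)) x :=
      sliceX (hVd t ht x)
    have hNx : HasDerivAt (fun y => N (t, y)) (fderiv ℝ N (t, x) (0, 1)) x :=
      sliceX (hNd t ht x)
    have hlu : HasDerivAt (fun y => Real.log (u t y))
        ((u t x)⁻¹ * fderiv ℝ U (t, x) (0, 1)) x :=
      (Real.hasDerivAt_log (hupos t x).ne').comp x hux
    have hlv : HasDerivAt (fun y => Real.log (v t y))
        ((v t x)⁻¹ * fderiv ℝ V (t, x) (0, 1)) x :=
      (Real.hasDerivAt_log (hvpos t x).ne').comp x hvx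
    have h := (hux.mul hNx).mul (hlu.sub hlv)
    -- the PDE: expressing the time derivatives
    have eq_u : fderiv ℝ U (t, x) (1, 0) =
        fderiv ℝ U (t, x) (0, 1) * N (t, x) + u t x * fderiv ℝ N (t, x) (0, 1) := by
      have h1 : pt u t x = fderiv ℝ U (t, x) (1, 0) :=
        HasDerivAt.deriv (sliceT (hUd t ht x))
      have h2 : px (fun s y => u s y * px (fun a b => f (u a b + v a b)) s y) t x =
          fderiv ℝ U (t, x) (0, 1) * N (t, x) + u t x * fderiv ℝ N (t, x) (0, 1) := by
        have heq : (fun y => u t y * px (fun a b => f (u a b + v a b)) t y) =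
            fun y => u t y * N (t, y) := by
          funext y; rw [hFN t ht y]
        show deriv (fun y => u t y * px (fun a b => f (u a b + v a b)) t y) x = _
        rw [heq]
        exact (hux.mul hNx).deriv
      rw [← h1, hu t ht x]
      exact h2
    have eq_v : fderiv ℝ V (t, x) (1, 0) =
        fderiv ℝ V (t, x) (0, 1) * N (t, x) + v t x * fderiv ℝ N (t, x) (0, 1) := by
      have h1 : pt v t x = fderiv ℝ V (t, x) (1, 0) :=
        HasDerivAt.deriv (sliceT (hVd t ht x))
      have h2 : px (fun s y => v s y * px (fun a b => f (u a b + v a b)) s y) t x =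
          fderiv ℝ V (t, x) (0, 1) * N (t, x) + v t x * fderiv ℝ N (t, x) (0, 1) := by
        have heq : (fun y => v t y * px (fun a b => f (u a b + v a b)) t y) =
            fun y => v t y * N (t, y) := by
          funext y; rw [hFN t ht y]
        show deriv (fun y => v t y * px (fun a b => f (u a b + v a b)) t y) x = _
        rw [heq]
        exact (hvx.mul hNx).deriv
      rw [← h1, hv t ht x]
      exact h2
    have hb := (hvpos t x).ne'
    have ha := (hupos t x).ne'
    have e2 : D t x =
        (fderiv ℝ U (t, x) (0, 1) * N (t, x) + u t x * fderiv ℝ N (t, x) (0, 1)) *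
            (Real.log (u t x) - Real.log (v t x)) +
          u t x * N (t, x) *
            ((u t x)⁻¹ * fderiv ℝ U (t, x) (0, 1) -
              (v t x)⁻¹ * fderiv ℝ V (t, x) (0, 1)) := by
      show fderiv ℝ U (t, x) (1, 0) * (Real.log (u t x) - Real.log (v t x)) +
          (fderiv ℝ U (t, x) (1, 0) - u t x / v t x * fderiv ℝ V (t, x) (1, 0)) = _
      rw [eq_u, eq_v]
      field_simp [ha, hb]
      ring
    rw [e2]
    exact h
  -- joint continuity of the entropy density
  have hUc : ContinuousOn U (Icc 0 T ×ˢ (univ : Set ℝ)) := husmooth.continuousOn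
  have hVc : ContinuousOn V (Icc 0 T ×ˢ (univ : Set ℝ)) := hvsmooth.continuousOn
  set LL : ℝ × ℝ → ℝ := fun p => U p * Real.log (U p / V p) with hLLdef
  have hLC : ContinuousOn LL (Icc 0 T ×ˢ (univ : Set ℝ)) :=
    hUc.mul (ContinuousOn.log (hUc.div hVc fun p _ => (hvpos p.1 p.2).ne')
      fun p _ => (div_pos (hupos p.1 p.2) (hvpos p.1 p.2)).ne')
  -- slice continuity in space
  have hLsl : ∀ t ∈ Icc (0:ℝ) T, Continuous (fun x => L t x) := by
    intro t ht
    have : ContinuousOn (fun x : ℝ => LL (t, x)) univ :=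
      hLC.comp ((continuous_const.prodMk continuous_id).continuousOn)
        (fun x _ => ⟨ht, mem_univ x⟩)
    exact continuousOn_univ.1 this
  -- slice continuity in time
  have hLtc : ∀ x : ℝ, ContinuousOn (fun t => L t x) (Icc (0:ℝ) T) := by
    intro x
    exact hLC.comp ((continuous_id.prodMk continuous_const).continuousOn)
      (fun t ht => ⟨ht, mem_univ x⟩)
  -- the density vanishes outside a compact interval
  set I : Set ℝ := Icc (-(R+1)) (R+1) with hIdef
  have hzero : ∀ t ∈ Icc (0:ℝ) T, ∀ x ∉ I, L t x = 0 := by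
    intro t ht x hx
    have hRx : R ≤ |x| := by
      simp only [hIdef, mem_Icc, not_and_or, not_le] at hx
      rw [le_abs]
      rcases hx with h | h
      · right; linarith
      · left; linarith
    have := hdecay t ht x hRx
    simp only [hLdef, this, div_self (hvpos t x).ne', Real.log_one, mul_zero]
  set g : ℝ → ℝ := fun t => ∫ x in I, L t x with hgdef
  have hginterp : ∀ t ∈ Icc (0:ℝ) T,
      ∫ x, u t x * Real.log (u t x / v t x) = g t := by
    intro t ht
    exact (setIntegral_eq_integral_of_forall_compl_eq_zero
      (fun x hx => hzero t ht x hx)).symm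
  -- uniform bound for the density
  have h0I : (0:ℝ) ∈ I := by rw [hIdef, mem_Icc]; constructor <;> linarith
  obtain ⟨C, hC⟩ : ∃ C, ∀ p ∈ Icc (0:ℝ) T ×ˢ I, |LL p| ≤ C := by
    have hcomp : IsCompact (Icc (0:ℝ) T ×ˢ I) := isCompact_Icc.prod isCompact_Icc
    have hne : (Icc (0:ℝ) T ×ˢ I).Nonempty := ⟨(0, 0), ⟨⟨le_refl 0, hT.le⟩, h0I⟩⟩
    obtain ⟨p₀, _, hp₀⟩ := hcomp.exists_isMaxOn hne
      ((hLC.mono (prod_mono_right (subset_univ I))).abs)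
    exact ⟨|LL p₀|, fun p hp => hp₀ hp⟩
  -- continuity of g on [0, T]
  have hgc : ∀ t₀ ∈ Icc (0:ℝ) T, ContinuousWithinAt g (Icc (0:ℝ) T) t₀ := by
    intro t₀ ht₀
    apply continuousWithinAt_of_dominated (bound := fun _ => C)
    · filter_upwards [self_mem_nhdsWithin] with t ht
      exact (hLsl t ht).aestronglyMeasurable
    · filter_upwards [self_mem_nhdsWithin] with t ht
      rw [ae_restrict_iff' measurableSet_Icc]
      filter_upwards with x hx
      rw [Real.norm_eq_abs]
      exact hC (t, x) ⟨ht, hx⟩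
    · exact integrableOn_const measure_Icc_lt_top.ne
    · filter_upwards with x
      exact (hLtc x) t₀ ht₀
  -- joint continuity of D
  set DD : ℝ × ℝ → ℝ := fun p =>
    fderiv ℝ U p (1, 0) * (Real.log (U p) - Real.log (V p)) +
      (fderiv ℝ U p (1, 0) - U p / V p * fderiv ℝ V p (1, 0)) with hDDdef
  have hUcΩ : ContinuousOn U Ω := hUΩ.continuousOn
  have hVcΩ : ContinuousOn V Ω := hVΩ.continuousOn
  have hfdUc : ContinuousOn (fun p => fderiv ℝ U p ((1:ℝ), (0:ℝ))) Ω :=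
    ((hUΩ.fderiv_of_isOpen (m := 1) hΩ (by norm_num)).continuousOn).clm_apply continuousOn_const
  have hfdVc : ContinuousOn (fun p => fderiv ℝ V p ((1:ℝ), (0:ℝ))) Ω :=
    ((hVΩ.fderiv_of_isOpen (m := 1) hΩ (by norm_num)).continuousOn).clm_apply continuousOn_const
  have hDDc : ContinuousOn DD Ω := by
    apply ContinuousOn.add
    · exact hfdUc.mul ((ContinuousOn.log hUcΩ fun p _ => (hupos p.1 p.2).ne').sub
        (ContinuousOn.log hVcΩ fun p _ => (hvpos p.1 p.2).ne'))
    · exact hfdUc.sub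
        (((hUcΩ.div hVcΩ fun p _ => (hvpos p.1 p.2).ne')).mul hfdVc)
  have hDDD : ∀ t x : ℝ, D t x = DD (t, x) := fun t x => rfl
  -- the entropy flux vanishes at the boundary
  have hGzero : ∀ t ∈ Icc (0:ℝ) T, ∀ x : ℝ, R ≤ |x| → G t x = 0 := by
    intro t ht x hx
    have := hdecay t ht x hx
    simp only [hGdef, this, sub_self, mul_zero]
  -- H' = 0 on the interior
  have hg0 : ∀ t₀ ∈ Ioo (0:ℝ) T, HasDerivAt g 0 t₀ := by
    intro t₀ ht₀
    set ε : ℝ := min t₀ (T - t₀) / 2 with hεdef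
    have hε : 0 < ε := by
      have h1 : 0 < min t₀ (T - t₀) := lt_min ht₀.1 (by linarith [ht₀.2])
      positivity
    have hεt : ε ≤ t₀ / 2 := by
      have := min_le_left t₀ (T - t₀); rw [hεdef]; linarith
    have hεT : ε ≤ (T - t₀) / 2 := by
      have := min_le_right t₀ (T - t₀); rw [hεdef]; linarith
    have hsub : Icc (t₀ - ε) (t₀ + ε) ⊆ Ioo (0:ℝ) T := by
      intro s hs
      constructor
      · have := hs.1; linarith [ht₀.1]
      · have := hs.2; linarith [ht₀.2]
    have hballsub : Metric.ball t₀ ε ⊆ Icc (t₀ - ε) (t₀ + ε) := by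
      intro s hs
      rw [Metric.mem_ball, Real.dist_eq, abs_lt] at hs
      exact ⟨by linarith [hs.1], by linarith [hs.2]⟩
    -- uniform bound for D near t₀
    obtain ⟨C₂, hC₂⟩ : ∃ C₂, ∀ p ∈ Icc (t₀ - ε) (t₀ + ε) ×ˢ I, |DD p| ≤ C₂ := by
      have hKsub : Icc (t₀ - ε) (t₀ + ε) ×ˢ I ⊆ Ω :=
        fun p hp => ⟨hsub hp.1, mem_univ _⟩
      have hcomp : IsCompact (Icc (t₀ - ε) (t₀ + ε) ×ˢ I) :=
        isCompact_Icc.prod isCompact_Icc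
      have hne : (Icc (t₀ - ε) (t₀ + ε) ×ˢ I).Nonempty :=
        ⟨(t₀, 0), ⟨⟨by linarith, by linarith⟩, h0I⟩⟩
      obtain ⟨p₀, _, hp₀⟩ := hcomp.exists_isMaxOn hne ((hDDc.mono hKsub).abs)
      exact ⟨|DD p₀|, fun p hp => hp₀ hp⟩
    have hDsl : Continuous (fun x => D t₀ x) := by
      have : ContinuousOn (fun x : ℝ => DD (t₀, x)) univ :=
        hDDc.comp ((continuous_const.prodMk continuous_id).continuousOn)
          (fun x _ => ⟨ht₀, mem_univ x⟩)
      exact continuousOn_univ.1 this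
    have hmain := hasDerivAt_integral_of_dominated_loc_of_deriv_le
      (F := L) (F' := D) (μ := volume.restrict I) (bound := fun _ => C₂)
      (x₀ := t₀) (Metric.ball_mem_nhds t₀ hε)
      ?_ ?_ ?_ ?_ ?_ ?_
    · obtain ⟨-, hder⟩ := hmain
      have hzeroint : ∫ x in I, D t₀ x = 0 := by
        have ha : -(R+1) ≤ (R+1) := by linarith
        have hft : ∫ x in (-(R+1))..(R+1), D t₀ x = G t₀ (R+1) - G t₀ (-(R+1)) := by
          apply intervalIntegral.integral_eq_sub_of_hasDerivAt
          · intro x _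
            exact K2 t₀ ht₀ x
          · exact hDsl.intervalIntegrable _ _
        have e1 : ∫ x in I, D t₀ x = ∫ x in (-(R+1))..(R+1), D t₀ x := by
          rw [hIdef, integral_Icc_eq_integral_Ioc,
            intervalIntegral.integral_of_le ha]
        have hGb : G t₀ (R+1) = 0 := by
          apply hGzero t₀ (Ioo_subset_Icc_self ht₀)
          rw [abs_of_pos (by linarith)]; linarith
        have hGa : G t₀ (-(R+1)) = 0 := by
          apply hGzero t₀ (Ioo_subset_Icc_self ht₀)
          rw [abs_neg, abs_of_pos (by linarith)]; linarith
        rw [e1, hft, hGa, hGb, sub_zero]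
      rwa [hzeroint] at hder
    · filter_upwards [isOpen_Ioo.eventually_mem ht₀] with t ht
      exact (hLsl t (Ioo_subset_Icc_self ht)).aestronglyMeasurable
    · exact (hLsl t₀ (Ioo_subset_Icc_self ht₀)).integrableOn_Icc
    · exact hDsl.aestronglyMeasurable
    · rw [ae_restrict_iff' measurableSet_Icc]
      filter_upwards with x hx
      intro s hs
      rw [Real.norm_eq_abs, hDDD]
      exact hC₂ (s, x) ⟨hballsub hs, hx⟩
    · exact integrableOn_const measure_Icc_lt_top.ne
    · filter_upwards with x
      intro s hs
      exact K1 s (hsub (hballsub hs)) x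
  -- g is constant on the open interval
  have hconst : ∀ s ∈ Ioo (0:ℝ) T, ∀ t ∈ Ioo (0:ℝ) T, s ≤ t → g t = g s := by
    intro s hs t ht hst
    have hIcc : Icc s t ⊆ Ioo (0:ℝ) T := fun y hy =>
      ⟨lt_of_lt_of_le hs.1 hy.1, lt_of_le_of_lt hy.2 ht.2⟩
    exact constant_of_has_deriv_right_zero
      (fun y hy => ((hg0 y (hIcc hy)).continuousAt).continuousWithinAt)
      (fun y hy => (hg0 y (hIcc (Ico_subset_Icc_self hy))).hasDerivWithinAt)
      t (right_mem_Icc.2 hst)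
  have hm : T / 2 ∈ Ioo (0:ℝ) T := ⟨by linarith, by linarith⟩
  have hval : ∀ t ∈ Ioo (0:ℝ) T, g t = g (T / 2) := by
    intro t ht
    rcases le_total t (T / 2) with h | h
    · exact (hconst t ht (T / 2) hm h).symm
    · exact hconst (T / 2) hm t ht h
  -- endpoint values by continuity
  have hend : ∀ t₀ ∈ Icc (0:ℝ) T, g t₀ = g (T / 2) := by
    intro t₀ ht₀
    rcases eq_or_lt_of_le ht₀.1 with h1 | h1
    swap
    · rcases eq_or_lt_of_le ht₀.2 with h2 | h2
      · rw [h2]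
        -- t₀ = T : use continuity from the left
        have hne : (𝓝[Ioo (0:ℝ) T] T).NeBot := by
          rw [← mem_closure_iff_nhdsWithin_neBot, closure_Ioo hT.ne]
          exact ⟨hT.le, le_refl T⟩
        have htend1 : Filter.Tendsto g (𝓝[Ioo (0:ℝ) T] T) (𝓝 (g T)) :=
          (hgc T ⟨hT.le, le_refl T⟩).mono_left
            (nhdsWithin_mono _ Ioo_subset_Icc_self)
        have htend2 : Filter.Tendsto g (𝓝[Ioo (0:ℝ) T] T) (𝓝 (g (T / 2))) := by
          apply Filter.Tendsto.congr' ?_ tendsto_const_nhds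
          filter_upwards [self_mem_nhdsWithin] with t ht
          exact (hval t ht).symm
        exact tendsto_nhds_unique htend1 htend2
      · exact hval t₀ ⟨h1, h2⟩
    · rw [← h1]
      -- t₀ = 0 : use continuity from the right
      have hne : (𝓝[Ioo (0:ℝ) T] (0:ℝ)).NeBot := by
        rw [← mem_closure_iff_nhdsWithin_neBot, closure_Ioo hT.ne]
        exact ⟨le_refl 0, hT.le⟩
      have htend1 : Filter.Tendsto g (𝓝[Ioo (0:ℝ) T] 0) (𝓝 (g 0)) :=
        (hgc 0 ⟨le_refl 0, hT.le⟩).mono_left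
          (nhdsWithin_mono _ Ioo_subset_Icc_self)
      have htend2 : Filter.Tendsto g (𝓝[Ioo (0:ℝ) T] 0) (𝓝 (g (T / 2))) := by
        apply Filter.Tendsto.congr' ?_ tendsto_const_nhds
        filter_upwards [self_mem_nhdsWithin] with t ht
        exact (hval t ht).symm
      exact tendsto_nhds_unique htend1 htend2
  -- conclusion
  intro t ht
  rw [hginterp t ht, hginterp 0 ⟨le_refl 0, hT.le⟩,
    hend t ht, hend 0 ⟨le_refl 0, hT.le⟩]
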